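/- Let Q be a lower transition rate operator on a finite nonempty set 𝒳 with operator norm ‖Q‖ := sup{‖Q f‖ : f ∈ 𝓛(𝒳), ‖f‖ = 1}. Then for every Δ ≥ 0 with Δ‖Q‖ ≤ 1, the map I + ΔQ (sending f to f + Δ Q f) is a lower transition operator; that is, for all f, g ∈ 𝓛(𝒳) and λ ≥ 0: (I + ΔQ)f ≥ min f pointwise, (I + ΔQ)(f+g) ≥ (I + ΔQ)f + (I + ΔQ)g pointwise, and (I + ΔQ)(λf) = λ (I + ΔQ)f. -/

import Mathlib

open Filter Topology

/-- The minimum of a real-valued function on a finite nonempty type. -/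
noncomputable def minf {X : Type*} [Fintype X] [Nonempty X] (f : X → ℝ) : ℝ :=
  Finset.univ.inf' Finset.univ_nonempty f

/-- The maximum of a real-valued function on a finite nonempty type. -/
noncomputable def maxf {X : Type*} [Fintype X] [Nonempty X] (f : X → ℝ) : ℝ :=
  Finset.univ.sup' Finset.univ_nonempty f

/-- The (real-valued) indicator function of a set. -/
noncomputable def ind {X : Type*} (A : Set X) : X → ℝ := A.indicator 1

/-- The conjugate (upper) operator `f ↦ -(Q (-f))`. -/
def conjOp {X : Type*} (Q : (X → ℝ) → (X → ℝ)) : (X → ℝ) → (X → ℝ) :=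
  fun f => -(Q (-f))

/-- A lower transition rate operator. -/
def IsLTRO {X : Type*} [Fintype X] (Q : (X → ℝ) → (X → ℝ)) : Prop :=
  (∀ μ : ℝ, Q (fun _ => μ) = 0) ∧
  (∀ f g : X → ℝ, Q f + Q g ≤ Q (f + g)) ∧
  (∀ l : ℝ, 0 ≤ l → ∀ f : X → ℝ, Q (l • f) = l • Q f) ∧
  (∀ x y : X, x ≠ y → 0 ≤ Q (ind {y}) x)

/-- A lower transition operator. -/
def IsLTO {X : Type*} [Fintype X] [Nonempty X] (T : (X → ℝ) → (X → ℝ)) : Prop :=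
  (∀ f : X → ℝ, ∀ x : X, minf f ≤ T f x) ∧
  (∀ f g : X → ℝ, T f + T g ≤ T (f + g)) ∧
  (∀ l : ℝ, 0 ≤ l → ∀ f : X → ℝ, T (l • f) = l • T f)

/-- `T` is the family of operators solving `d/dt T_t f = Q (T_t f)` on `[0,∞)`
with `T_0 f = f`. -/
def IsSol {X : Type*} [Fintype X] (Q : (X → ℝ) → (X → ℝ))
    (T : ℝ → (X → ℝ) → (X → ℝ)) : Prop :=
  (∀ f : X → ℝ, T 0 f = f) ∧
  (∀ f : X → ℝ, ∀ t : ℝ, 0 ≤ t →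
    HasDerivWithinAt (fun s => T s f) (Q (T t f)) (Set.Ici 0) t)

/-- Ergodicity of a lower transition rate operator, expressed via its
associated time-dependent family `T`. -/
def ErgodicQ {X : Type*} [Fintype X] (T : ℝ → (X → ℝ) → (X → ℝ)) : Prop :=
  ∀ f : X → ℝ, ∃ c : ℝ, Tendsto (fun t => T t f) atTop (𝓝 (fun _ : X => c))

/-- Ergodicity of a lower transition operator. -/
def ErgodicT {X : Type*} [Fintype X] (T : (X → ℝ) → (X → ℝ)) : Prop :=
  ∀ f : X → ℝ, ∃ c : ℝ, Tendsto (fun n : ℕ => T^[n] f) atTop (𝓝 (fun _ : X => c))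

/-- `x` is upper reachable from `y` (w.r.t. the lower transition rate operator `Q`). -/
def upperReach {X : Type*} [Fintype X] (Q : (X → ℝ) → (X → ℝ)) (y x : X) : Prop :=
  ∃ (n : ℕ) (p : ℕ → X), p 0 = y ∧ p n = x ∧
    ∀ k : ℕ, k < n → p (k + 1) ≠ p k ∧ 0 < conjOp Q (ind {p (k + 1)}) (p k)

/-- One step of the lower-reachability construction: `A ↦ A ∪ {y ∉ A : Q(𝟙_A)(y) > 0}`. -/
def lowerStep {X : Type*} [Fintype X] (Q : (X → ℝ) → (X → ℝ)) (A : Set X) : Set X :=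
  A ∪ {y : X | y ∉ A ∧ 0 < Q (ind A) y}

/-- `A` is lower reachable from `x`: `x ∈ Aₙ` where `n` is the first index with
`Aₙ = Aₙ₊₁` (equivalently, any such index, since the sequence is determined by
recursion and increasing). -/
def lowerReach {X : Type*} [Fintype X] (Q : (X → ℝ) → (X → ℝ)) (x : X) (A : Set X) : Prop :=
  ∃ n : ℕ, (lowerStep Q)^[n] A = (lowerStep Q)^[n + 1] A ∧ x ∈ (lowerStep Q)^[n] A

/-- The set `𝒳_RA := {x : ∃ n ≥ 1, min T̄ⁿ 𝟙ₓ > 0}`. -/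
noncomputable def XRA {X : Type*} [Fintype X] [Nonempty X]
    (T : (X → ℝ) → (X → ℝ)) : Set X :=
  {x : X | ∃ n : ℕ, 0 < minf ((conjOp T)^[n + 1] (ind {x}))}

/-- A regularly absorbing lower transition operator. -/
def RegAbs {X : Type*} [Fintype X] [Nonempty X] (T : (X → ℝ) → (X → ℝ)) : Prop :=
  (XRA T).Nonempty ∧ ∀ x : X, x ∉ XRA T → ∃ n : ℕ, 0 < T^[n + 1] (ind (XRA T)) x

/-- The set `𝒳_1A := {x : min T̄ 𝟙ₓ > 0}`. -/
noncomputable def X1A {X : Type*} [Fintype X] [Nonempty X]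
    (T : (X → ℝ) → (X → ℝ)) : Set X :=
  {x : X | 0 < minf (conjOp T (ind {x}))}

/-- A 1-step absorbing lower transition operator. -/
def OneStepAbs {X : Type*} [Fintype X] [Nonempty X] (T : (X → ℝ) → (X → ℝ)) : Prop :=
  (X1A T).Nonempty ∧ ∀ x : X, x ∉ X1A T → 0 < T (ind (X1A T)) x

/-- The operator (sup) norm of a non-negatively homogeneous operator. -/
noncomputable def opN {X : Type*} [Fintype X] (Q : (X → ℝ) → (X → ℝ)) : ℝ :=
  sSup {r : ℝ | ∃ f : X → ℝ, ‖f‖ = 1 ∧ r = ‖Q f‖}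


section Aux

variable {X : Type*} [Fintype X]

lemma QzeroAux {Q : (X → ℝ) → (X → ℝ)} (hQ : IsLTRO Q) : Q 0 = 0 := hQ.1 0

lemma QsumAux {Q : (X → ℝ) → (X → ℝ)} (hQ : IsLTRO Q)
    {ι : Type*} (s : Finset ι) (F : ι → X → ℝ) :
    ∑ i ∈ s, Q (F i) ≤ Q (∑ i ∈ s, F i) := by
  classical
  induction s using Finset.induction with
  | empty => simp [QzeroAux hQ]
  | @insert a s h ih =>
      rw [Finset.sum_insert h, Finset.sum_insert h]
      calc Q (F _) + ∑ i ∈ _, Q (F i) ≤ Q (F _) + Q (∑ i ∈ _, F i) :=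
            add_le_add_right ih _
        _ ≤ Q (F _ + ∑ i ∈ _, F i) := hQ.2.1 _ _

lemma indNormAux [Nonempty X] (x : X) : ‖ind ({x} : Set X)‖ = 1 := by
  classical
  refine le_antisymm ?_ ?_
  · refine (pi_norm_le_iff_of_nonneg zero_le_one).mpr fun y => ?_
    simp only [ind, Set.indicator_apply, Set.mem_singleton_iff, Pi.one_apply]
    split <;> simp
  · have : ‖ind ({x} : Set X) x‖ ≤ ‖ind ({x} : Set X)‖ := norm_le_pi_norm _ x
    simpa [ind] using this

lemma decompAux (f : X → ℝ) : f = ∑ y, f y • ind ({y} : Set X) := by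
  classical
  funext x
  simp only [Finset.sum_apply, Pi.smul_apply, smul_eq_mul, ind,
    Set.indicator_apply, Set.mem_singleton_iff, Pi.one_apply]
  rw [Finset.sum_congr rfl (fun y _ => by rw [mul_ite, mul_one, mul_zero])]
  simp

lemma QlbAux {Q : (X → ℝ) → (X → ℝ)} (hQ : IsLTRO Q)
    (g : X → ℝ) (hg : ∀ y, 0 ≤ g y) (x : X) :
    g x * Q (ind ({x} : Set X)) x ≤ Q g x := by
  classical
  have h1 : ∑ y, Q (fun z => g y • ind ({y} : Set X) z) ≤ Q g := by
    have := QsumAux hQ Finset.univ (fun y => g y • ind ({y} : Set X))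
    rwa [← decompAux g] at this
  have h2 : ∀ y : X, Q (fun z => g y • ind ({y} : Set X) z) = g y • Q (ind ({y} : Set X)) :=
    fun y => hQ.2.2.1 (g y) (hg y) _
  have h3 : ∑ y, g y • Q (ind ({y} : Set X)) ≤ Q g := by
    rw [← Finset.sum_congr rfl (fun y _ => h2 y)]; exact h1
  have h5 : (∑ y, g y • Q (ind ({y} : Set X))) x ≤ Q g x := h3 x
  rw [Finset.sum_apply] at h5
  have h6 : g x * Q (ind ({x} : Set X)) x ≤ ∑ y, (g y • Q (ind ({y} : Set X))) x := by
    rw [← Finset.add_sum_erase _ _ (Finset.mem_univ x)]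
    have : (0:ℝ) ≤ ∑ y ∈ Finset.univ.erase x, (g y • Q (ind ({y} : Set X))) x := by
      refine Finset.sum_nonneg fun y hy => ?_
      have hxy : x ≠ y := (Finset.ne_of_mem_erase hy).symm
      exact mul_nonneg (hg y) (hQ.2.2.2 x y hxy)
    simp only [Pi.smul_apply, smul_eq_mul] at this ⊢
    linarith
  exact le_trans h6 h5

lemma QconstShiftAux {Q : (X → ℝ) → (X → ℝ)} (hQ : IsLTRO Q)
    (f : X → ℝ) (c : ℝ) : Q (f + fun _ => c) = Q f := by
  refine le_antisymm ?_ ?_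
  · have h1 := hQ.2.1 (f + fun _ => c) (fun _ => -c)
    have h2 : (f + fun _ => c) + (fun _ => -c) = f := by funext z; simp
    rw [h2, hQ.1 (-c)] at h1
    simpa using h1
  · have h1 := hQ.2.1 f (fun _ => c)
    rw [hQ.1 c] at h1
    simpa using h1

lemma minf_le {X : Type*} [Fintype X] [Nonempty X] (f : X → ℝ) (x : X) :
    minf f ≤ f x := Finset.inf'_le f (Finset.mem_univ x)

lemma QlbAux2 [Nonempty X] {Q : (X → ℝ) → (X → ℝ)} (hQ : IsLTRO Q)
    (f : X → ℝ) (x : X) :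
    (f x - minf f) * Q (ind ({x} : Set X)) x ≤ Q f x := by
  set g : X → ℝ := fun z => f z - minf f with hg
  have hgnn : ∀ y, 0 ≤ g y := fun y => sub_nonneg.mpr (minf_le f y)
  have hfg : f = g + fun _ => minf f := by funext z; simp [hg]
  have key := QlbAux hQ g hgnn x
  have hQfg : Q g = Q f := by
    rw [hfg]; exact (QconstShiftAux hQ g (minf f)).symm
  calc (f x - minf f) * Q (ind ({x} : Set X)) x
      = g x * Q (ind ({x} : Set X)) x := rfl
    _ ≤ Q g x := key
    _ = Q f x := by rw [hQfg]

lemma QindNonposAux [Nonempty X] {Q : (X → ℝ) → (X → ℝ)} (hQ : IsLTRO Q) (x : X) :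
    Q (ind ({x} : Set X)) x ≤ 0 := by
  classical
  have hsum : ∑ y, Q (ind ({y} : Set X)) ≤ Q (∑ y, ind ({y} : Set X)) :=
    QsumAux hQ Finset.univ _
  have hone : (∑ y, ind ({y} : Set X)) = (fun _ : X => (1:ℝ)) := by
    have := decompAux (fun _ : X => (1:ℝ))
    simpa using this.symm
  rw [hone, hQ.1 1] at hsum
  have h5 : (∑ y, Q (ind ({y} : Set X))) x ≤ 0 := hsum x
  rw [Finset.sum_apply] at h5
  have h6 : Q (ind ({x} : Set X)) x ≤ ∑ y, Q (ind ({y} : Set X)) x := by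
    rw [← Finset.add_sum_erase _ _ (Finset.mem_univ x)]
    have : (0:ℝ) ≤ ∑ y ∈ Finset.univ.erase x, Q (ind ({y} : Set X)) x := by
      refine Finset.sum_nonneg fun y hy => ?_
      exact hQ.2.2.2 x y (Finset.ne_of_mem_erase hy).symm
    linarith
  linarith

lemma QnormBoundAux [Nonempty X] {Q : (X → ℝ) → (X → ℝ)} (hQ : IsLTRO Q) :
    ∃ C : ℝ, 0 ≤ C ∧ ∀ f : X → ℝ, ∀ x : X, |Q f x| ≤ C * ‖f‖ := by
  classical
  set B : ℝ := maxf (fun x : X => -(Q (ind ({x} : Set X)) x)) with hB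
  have hBle : ∀ x : X, -(Q (ind ({x} : Set X)) x) ≤ B := fun x => by
    rw [hB]; exact
      Finset.le_sup' (fun x : X => -(Q (ind ({x} : Set X)) x)) (Finset.mem_univ x)
  have hBnn : 0 ≤ B := by
    obtain ⟨x⟩ := ‹Nonempty X›
    have := QindNonposAux hQ x
    linarith [hBle x]
  have hbound : ∀ f : X → ℝ, ∀ x : X, (f x - minf f) ≤ 2 * ‖f‖ := by
    intro f x
    obtain ⟨x0, _, hx0⟩ := Finset.exists_mem_eq_inf' (Finset.univ_nonempty) f
    have h1 : |f x| ≤ ‖f‖ := by simpa using norm_le_pi_norm f x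
    have h2 : |f x0| ≤ ‖f‖ := by simpa using norm_le_pi_norm f x0
    have : minf f = f x0 := hx0
    rw [this]
    cases abs_le.mp h1; cases abs_le.mp h2; linarith
  have hlow : ∀ f : X → ℝ, ∀ x : X, -(2 * B * ‖f‖) ≤ Q f x := by
    intro f x
    have h1 := QlbAux2 hQ f x
    have h2 : -B ≤ Q (ind ({x} : Set X)) x := by linarith [hBle x]
    have h3 : Q (ind ({x} : Set X)) x ≤ 0 := QindNonposAux hQ x
    have h4 : 0 ≤ f x - minf f := sub_nonneg.mpr (minf_le f x)
    have h5 := hbound f x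
    nlinarith
  refine ⟨2 * B, by linarith, fun f x => ?_⟩
  rw [abs_le]
  constructor
  · have := hlow f x; linarith
  · have h0 : Q f + Q (-f) ≤ Q (f + (-f)) := hQ.2.1 f (-f)
    have h1 : f + (-f) = 0 := by funext z; simp
    rw [h1, QzeroAux hQ] at h0
    have h2 : Q f x + Q (-f) x ≤ 0 := h0 x
    have h3 := hlow (-f) x
    have h4 : ‖(-f : X → ℝ)‖ = ‖f‖ := norm_neg f
    rw [h4] at h3
    linarith

lemma QopNAux [Nonempty X] {Q : (X → ℝ) → (X → ℝ)} (hQ : IsLTRO Q) (x : X) :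
    -(opN Q) ≤ Q (ind ({x} : Set X)) x := by
  obtain ⟨C, hC0, hC⟩ := QnormBoundAux hQ
  have hbdd : BddAbove {r : ℝ | ∃ f : X → ℝ, ‖f‖ = 1 ∧ r = ‖Q f‖} := by
    refine ⟨C, fun r hr => ?_⟩
    obtain ⟨f, hf1, rfl⟩ := hr
    refine (pi_norm_le_iff_of_nonneg hC0).mpr fun y => ?_
    have := hC f y
    rw [hf1, mul_one] at this
    simpa using this
  have hmem : ‖Q (ind ({x} : Set X))‖ ∈ {r : ℝ | ∃ f : X → ℝ, ‖f‖ = 1 ∧ r = ‖Q f‖} :=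
    ⟨ind ({x} : Set X), indNormAux x, rfl⟩
  have h1 : ‖Q (ind ({x} : Set X))‖ ≤ opN Q := le_csSup hbdd hmem
  have h2 : |Q (ind ({x} : Set X)) x| ≤ ‖Q (ind ({x} : Set X))‖ := by
    simpa using norm_le_pi_norm (Q (ind ({x} : Set X))) x
  cases abs_le.mp h2
  linarith

end Aux

/-- If `Δ ≥ 0` and `Δ‖Q‖ ≤ 1`, then `I + ΔQ` is a lower transition operator. -/
theorem stmt10 {X : Type*} [Fintype X] [Nonempty X]
    (Q : (X → ℝ) → (X → ℝ)) (hQ : IsLTRO Q)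
    (Δ : ℝ) (hΔ : 0 ≤ Δ) (h : Δ * opN Q ≤ 1) :
    IsLTO (fun f : X → ℝ => f + Δ • Q f) := by
  obtain ⟨hconst, hsuper, hhom, hpos⟩ := hQ
  have hQ' : IsLTRO Q := ⟨hconst, hsuper, hhom, hpos⟩
  refine ⟨?_, ?_, ?_⟩
  · intro f x
    have h1 := QlbAux2 hQ' f x
    have h2 := QopNAux hQ' (X := X) x
    have h3 : Q (ind ({x} : Set X)) x ≤ 0 := QindNonposAux hQ' x
    have h4 : 0 ≤ f x - minf f := sub_nonneg.mpr (minf_le f x)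
    have h5 : (f x - minf f) * (-(opN Q)) ≤ (f x - minf f) * Q (ind ({x} : Set X)) x :=
      mul_le_mul_of_nonneg_left h2 h4
    have h6 : Δ * ((f x - minf f) * (-(opN Q))) ≤ Δ * Q f x :=
      mul_le_mul_of_nonneg_left (le_trans h5 h1) hΔ
    simp only [Pi.add_apply, Pi.smul_apply, smul_eq_mul]
    nlinarith
  · intro f g x
    have h1 := hsuper f g
    have h2 : Q f x + Q g x ≤ Q (f + g) x := h1 x
    simp only [Pi.add_apply, Pi.smul_apply, smul_eq_mul]
    nlinarith [mul_le_mul_of_nonneg_left h2 hΔ]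
  · intro l hl f
    funext x
    have := congrFun (hhom l hl f) x
    simp only [Pi.add_apply, Pi.smul_apply, smul_eq_mul] at this ⊢
    rw [this]; ring
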